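/- Let u:[0,1]→ℝ be nondecreasing and let u(1⁻) := lim_{t→1⁻} u(t) be its left limit at 1. Then there exists a function δ:(0,∞)→(0,∞) with lim_{ε→0⁺} δ(ε) = 0 such that for every ε > 0 and every nondecreasing function g:[0,1]→ℝ with ∫₀¹ |g(t) − u(t)| dt < ε, one has g(1) ≥ u(1⁻) − δ(ε). -/

import Mathlib

open MeasureTheory

lemma key_lemma (u g : ℝ → ℝ) (hu : MonotoneOn u (Set.Icc 0 1))
    (hg : MonotoneOn g (Set.Icc 0 1)) (t₀ : ℝ) (ht₀ : t₀ ∈ Set.Ico (0:ℝ) 1)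
    (ε : ℝ) (hε : 0 < ε)
    (hint : (∫ t in Set.Icc (0:ℝ) 1, |g t - u t|) < ε) :
    g 1 ≥ u t₀ - ε / (1 - t₀) := by
  have h1t : 0 < 1 - t₀ := by linarith [ht₀.2]
  rcases le_or_gt (u t₀) (g 1) with h | h
  · have : 0 < ε / (1 - t₀) := div_pos hε h1t
    linarith
  · set c := u t₀ - g 1 with hc
    have hcpos : 0 < c := by simp [hc]; linarith
    have hintu : IntegrableOn u (Set.Icc 0 1) := hu.integrableOn_isCompact isCompact_Icc
    have hintg : IntegrableOn g (Set.Icc 0 1) := hg.integrableOn_isCompact isCompact_Icc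
    have hintabs : IntegrableOn (fun t => |g t - u t|) (Set.Icc 0 1) := (hintg.sub hintu).abs
    have hsub : Set.Icc t₀ 1 ⊆ Set.Icc (0:ℝ) 1 := Set.Icc_subset_Icc ht₀.1 le_rfl
    have hlow : ∀ t ∈ Set.Icc t₀ 1, c ≤ |g t - u t| := by
      intro t ht
      have htmem : t ∈ Set.Icc (0:ℝ) 1 := hsub ht
      have h1 : u t₀ ≤ u t := hu ⟨ht₀.1, ht₀.2.le⟩ htmem ht.1
      have h2 : g t ≤ g 1 := hg htmem (by norm_num) ht.2
      have : c ≤ u t - g t := by simp [hc]; linarith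
      calc c ≤ u t - g t := this
        _ ≤ |g t - u t| := by rw [abs_sub_comm]; exact le_abs_self _
    have step1 : c * (1 - t₀) ≤ ∫ t in Set.Icc t₀ 1, |g t - u t| := by
      have := setIntegral_mono_on (integrableOn_const (by
          rw [Real.volume_Icc]; exact ENNReal.ofReal_ne_top))
        (hintabs.mono_set hsub) measurableSet_Icc hlow
      rwa [setIntegral_const, Real.volume_real_Icc_of_le (by linarith), smul_eq_mul,
        mul_comm] at this
    have step2 : (∫ t in Set.Icc t₀ 1, |g t - u t|) ≤ ∫ t in Set.Icc (0:ℝ) 1, |g t - u t| := by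
      apply setIntegral_mono_set hintabs
      · filter_upwards with t using abs_nonneg _
      · exact Filter.Eventually.of_forall hsub
    have : c * (1 - t₀) < ε := lt_of_le_of_lt (step1.trans step2) hint
    have hclt : c < ε / (1 - t₀) := by
      rw [lt_div_iff₀ h1t]; exact this
    simp only [hc] at hclt
    linarith

theorem stmt_4 (u : ℝ → ℝ) (hu : MonotoneOn u (Set.Icc 0 1))
    (β : ℝ) (hβ : Filter.Tendsto u (nhdsWithin 1 (Set.Iio 1)) (nhds β)) :
    ∃ δ : ℝ → ℝ,
      (∀ ε > (0:ℝ), 0 < δ ε) ∧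
      Filter.Tendsto δ (nhdsWithin 0 (Set.Ioi 0)) (nhds 0) ∧
      ∀ ε > (0:ℝ), ∀ g : ℝ → ℝ, MonotoneOn g (Set.Icc 0 1) →
        (∫ t in Set.Icc (0:ℝ) 1, |g t - u t|) < ε →
        g 1 ≥ β - δ ε := by
  -- u t ≤ β for t ∈ [0,1)
  have huleβ : ∀ t ∈ Set.Ico (0:ℝ) 1, u t ≤ β := by
    intro t ht
    refine ge_of_tendsto hβ ?_
    have h1 : ∀ᶠ s in nhdsWithin 1 (Set.Iio 1), t < s :=
      nhdsWithin_le_nhds (lt_mem_nhds ht.2)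
    have h2 : ∀ᶠ s in nhdsWithin (1:ℝ) (Set.Iio 1), s ∈ Set.Iio 1 := self_mem_nhdsWithin
    filter_upwards [h1, h2] with s hs1 hs2
    exact hu ⟨ht.1, ht.2.le⟩ ⟨by linarith [ht.1], hs2.le⟩ hs1.le
  set r : ℝ → ℝ := fun ε => min (Real.sqrt ε) (1/2) with hr
  refine ⟨fun ε => (β - u (1 - r ε)) + (Real.sqrt ε + 2 * ε), ?_, ?_, ?_⟩
  · intro ε hε
    have hrε : 0 < r ε := lt_min (Real.sqrt_pos.2 hε) (by norm_num)
    have hrle : r ε ≤ 1/2 := min_le_right _ _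
    have : u (1 - r ε) ≤ β := huleβ _ ⟨by linarith, by linarith⟩
    have : 0 < Real.sqrt ε + 2 * ε := by positivity
    show (0:ℝ) < (β - u (1 - r ε)) + (Real.sqrt ε + 2 * ε)
    linarith
  · have hβ0 : Filter.Tendsto (fun ε => β - u (1 - r ε)) (nhdsWithin 0 (Set.Ioi 0)) (nhds 0) := by
      have hcomp : Filter.Tendsto (fun ε => 1 - r ε) (nhdsWithin 0 (Set.Ioi 0))
          (nhdsWithin 1 (Set.Iio 1)) := by
        apply tendsto_nhdsWithin_of_tendsto_nhds_of_eventually_within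
        · have : Filter.Tendsto r (nhdsWithin 0 (Set.Ioi 0)) (nhds 0) := by
            have hsq : Filter.Tendsto Real.sqrt (nhdsWithin 0 (Set.Ioi 0)) (nhds 0) := by
              simpa using (Real.continuous_sqrt.tendsto 0).mono_left nhdsWithin_le_nhds
            have : Filter.Tendsto r (nhdsWithin 0 (Set.Ioi 0)) (nhds (min 0 (1/2))) :=
              hsq.min tendsto_const_nhds
            simpa using this
          have := this.const_sub 1
          simpa using this
        · filter_upwards [self_mem_nhdsWithin] with ε (hε : ε ∈ Set.Ioi 0)
          have : 0 < r ε := lt_min (Real.sqrt_pos.2 hε) (by norm_num)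
          simp only [Set.mem_Iio]; linarith
      have := (hβ.comp hcomp).const_sub β
      simpa using this
    have h2 : Filter.Tendsto (fun ε : ℝ => Real.sqrt ε + 2 * ε) (nhdsWithin 0 (Set.Ioi 0)) (nhds 0) := by
      have hsq : Filter.Tendsto Real.sqrt (nhdsWithin 0 (Set.Ioi 0)) (nhds 0) := by
        simpa using (Real.continuous_sqrt.tendsto 0).mono_left nhdsWithin_le_nhds
      have hlin : Filter.Tendsto (fun ε : ℝ => 2 * ε) (nhdsWithin 0 (Set.Ioi 0)) (nhds 0) := by
        have hc : Continuous (fun ε : ℝ => 2 * ε) := continuous_const.mul continuous_id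
        have := (hc.tendsto 0).mono_left (nhdsWithin_le_nhds (s := Set.Ioi (0:ℝ)))
        simpa using this
      simpa using hsq.add hlin
    simpa using hβ0.add h2
  · intro ε hε g hg hint
    have hrε : 0 < r ε := lt_min (Real.sqrt_pos.2 hε) (by norm_num)
    have hrle : r ε ≤ 1/2 := min_le_right _ _
    have ht₀ : (1 - r ε) ∈ Set.Ico (0:ℝ) 1 := ⟨by linarith, by linarith⟩
    have hkey := key_lemma u g hu hg (1 - r ε) ht₀ ε hε hint
    have hdiv : ε / (1 - (1 - r ε)) = ε / r ε := by ring_nf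
    rw [hdiv] at hkey
    have hbound : ε / r ε ≤ Real.sqrt ε + 2 * ε := by
      rcases le_or_gt (Real.sqrt ε) (1/2) with h | h
      · have : r ε = Real.sqrt ε := min_eq_left h
        rw [this, Real.div_sqrt]
        linarith
      · have : r ε = 1/2 := min_eq_right h.le
        rw [this]
        have : Real.sqrt ε ≥ 0 := Real.sqrt_nonneg _
        linarith
    show g 1 ≥ β - ((β - u (1 - r ε)) + (Real.sqrt ε + 2 * ε))
    have hule : u (1 - r ε) ≤ β := huleβ _ ht₀
    linarith [hkey]
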